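/- The trilinear form (R₁, R₂, R₃) ↦ ⟨B(R₁, R₂), R₃⟩ on algebraic curvature operators is symmetric in its three entries, where B is the polarization of Q(R) = R² + R^#. -/

import Mathlib

open Matrix

noncomputable section

/-! Model of Λ²ℝⁿ as the space of skew-symmetric n×n real matrices, via the
identification x∧y ↦ (u ↦ ⟨x,u⟩y - ⟨y,u⟩x), with inner product
⟨x∧y, z∧t⟩ = ⟨x,z⟩⟨y,t⟩ - ⟨x,t⟩⟨y,z⟩, i.e. ⟨A,B⟩ = (1/2) tr(AᵀB). -/

/-- Λ²ℝⁿ, modelled as skew-symmetric matrices. -/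
def sk (n : ℕ) : Submodule ℝ (Matrix (Fin n) (Fin n) ℝ) where
  carrier := {A | Aᵀ = -A}
  add_mem' := by
    intro a b ha hb
    simp only [Set.mem_setOf_eq] at *
    rw [Matrix.transpose_add, ha, hb, neg_add]
  zero_mem' := by simp
  smul_mem' := by
    intro c a ha
    simp only [Set.mem_setOf_eq] at *
    rw [Matrix.transpose_smul, ha, smul_neg]

theorem sk_mem {n : ℕ} {A : Matrix (Fin n) (Fin n) ℝ} : A ∈ sk n ↔ Aᵀ = -A := Iff.rfl

/-- The inner product on Λ²ℝⁿ induced by the standard one on ℝⁿ. -/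
def ip {n : ℕ} (A B : sk n) : ℝ := (∑ i, ∑ j, A.1 i j * B.1 i j) / 2

/-- The wedge product x∧y of two vectors of ℝⁿ, as an element of Λ²ℝⁿ. -/
def wedge {n : ℕ} (x y : Fin n → ℝ) : sk n :=
  ⟨Matrix.of fun i j => x i * y j - x j * y i, by
    rw [sk_mem]
    ext i j
    simp only [Matrix.transpose_apply, Matrix.of_apply, Matrix.neg_apply]
    ring⟩

/-- The Lie bracket on Λ²ℝⁿ ≅ so(n). -/
def br {n : ℕ} (A B : sk n) : sk n :=
  ⟨A.1 * B.1 - B.1 * A.1, by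
    have hA := A.2
    have hB := B.2
    rw [sk_mem] at *
    rw [Matrix.transpose_sub, Matrix.transpose_mul, Matrix.transpose_mul, hA, hB]
    simp only [Matrix.neg_mul, Matrix.mul_neg, neg_neg, neg_sub]⟩

/-- The i-th standard basis vector of ℝⁿ. -/
def stdVec (n : ℕ) (i : Fin n) : Fin n → ℝ := Pi.single i 1

/-- A symmetric endomorphism of Λ²ℝⁿ. -/
def IsSym {n : ℕ} (R : sk n →ₗ[ℝ] sk n) : Prop := ∀ A B, ip (R A) B = ip A (R B)

/-- The first Bianchi identity. -/
def Bianchi {n : ℕ} (R : sk n →ₗ[ℝ] sk n) : Prop :=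
  ∀ x y z t : Fin n → ℝ,
    ip (R (wedge x y)) (wedge z t) + ip (R (wedge z x)) (wedge y t)
      + ip (R (wedge y z)) (wedge x t) = 0

/-- The quadratic form η ↦ ⟨R^# η, η⟩ = -(1/2) ∑ᵢ ⟨[η, R([η, R(ωᵢ)])], ωᵢ⟩,
summed over the orthonormal basis (ωᵢⱼ = eᵢ∧eⱼ)_{i<j} of Λ²ℝⁿ. -/
def sharpForm {n : ℕ} (R : sk n →ₗ[ℝ] sk n) (η : sk n) : ℝ :=
  -(1 / 2) * ∑ i, ∑ j,
    if i < j then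
      ip (br η (R (br η (R (wedge (stdVec n i) (stdVec n j))))))
        (wedge (stdVec n i) (stdVec n j))
    else 0

/-- `S` is the sharp R^# of `R`: the symmetric operator whose quadratic form is
`sharpForm R`. -/
def IsSharp {n : ℕ} (R S : sk n →ₗ[ℝ] sk n) : Prop :=
  IsSym S ∧ ∀ η, ip (S η) η = sharpForm R η

/-- The Ricci tensor of a curvature operator. -/
def ric {n : ℕ} (R : sk n →ₗ[ℝ] sk n) (x y : Fin n → ℝ) : ℝ :=
  ∑ i, ip (R (wedge x (stdVec n i))) (wedge y (stdVec n i))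

/-- The inner product on endomorphisms of Λ²ℝⁿ induced by that of Λ²ℝⁿ. -/
def opIp {n : ℕ} (R S : sk n →ₗ[ℝ] sk n) : ℝ :=
  ∑ i, ∑ j,
    if i < j then
      ip (R (wedge (stdVec n i) (stdVec n j))) (S (wedge (stdVec n i) (stdVec n j)))
    else 0

/-- The polarization B(X,Y) = (1/2)(Q(X+Y) - Q(X) - Q(Y)) of Q(R) = R² + R^#, where
SX, SY, SXY denote the sharps of X, Y and X+Y respectively. -/
def Bpol {n : ℕ} (X Y SX SY SXY : sk n →ₗ[ℝ] sk n) : sk n →ₗ[ℝ] sk n :=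
  ((1 : ℝ) / 2) • (((X + Y) ∘ₗ (X + Y) + SXY) - (X ∘ₗ X + SX) - (Y ∘ₗ Y + SY))


section Infra
open Finset

variable {n : ℕ}

private def PP (n : ℕ) : Finset (Fin n × Fin n) := Finset.univ.filter fun p => p.1 < p.2

private def w {n : ℕ} (p : Fin n × Fin n) : sk n := wedge (stdVec n p.1) (stdVec n p.2)

private lemma skw (A : sk n) (i j : Fin n) : A.1 j i = - A.1 i j := by
  have h := A.2
  rw [sk_mem] at h
  have := congrFun (congrFun h i) j
  simpa using this

private lemma ip_comm (A B : sk n) : ip A B = ip B A := by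
  unfold ip
  congr 1
  exact Finset.sum_congr rfl fun i _ => Finset.sum_congr rfl fun j _ => mul_comm _ _

private lemma ip_add_left (A B C : sk n) : ip (A + B) C = ip A C + ip B C := by
  unfold ip
  simp only [Submodule.coe_add, Matrix.add_apply, add_mul, Finset.sum_add_distrib, add_div]

private lemma ip_add_right (A B C : sk n) : ip A (B + C) = ip A B + ip A C := by
  rw [ip_comm, ip_add_left, ip_comm B A, ip_comm C A]

private lemma ip_neg_left (A B : sk n) : ip (-A) B = - ip A B := by
  unfold ip
  simp only [NegMemClass.coe_neg, Matrix.neg_apply, neg_mul, Finset.sum_neg_distrib, neg_div]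

private lemma ip_sub_left (A B C : sk n) : ip (A - B) C = ip A C - ip B C := by
  have : A - B = A + (-B) := by abel
  rw [this, ip_add_left, ip_neg_left]; ring

private lemma ip_smul_left (c : ℝ) (A B : sk n) : ip (c • A) B = c * ip A B := by
  unfold ip
  simp only [SetLike.val_smul, Matrix.smul_apply, smul_eq_mul, mul_assoc, ← Finset.mul_sum]
  ring

private lemma ifsum_eq (g : Fin n → Fin n → ℝ) :
    (∑ i, ∑ j, if i < j then g i j else 0) = ∑ p ∈ PP n, g p.1 p.2 := by
  rw [PP, Finset.sum_filter, Fintype.sum_prod_type]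

private lemma sum_sym_eq (g : Fin n → Fin n → ℝ) (hsym : ∀ i j, g j i = g i j)
    (hdiag : ∀ i, g i i = 0) :
    (∑ i, ∑ j, g i j) = 2 * ∑ p ∈ PP n, g p.1 p.2 := by
  have h1 : ∀ i j : Fin n, g i j
      = (if i < j then g i j else 0) + (if j < i then g i j else 0) := by
    intro i j
    rcases lt_trichotomy i j with h|h|h
    · simp [h, asymm h]
    · subst h; simp [hdiag, lt_irrefl]
    · simp [h, asymm h]
  have h2 : (∑ i, ∑ j, g i j)
      = (∑ i, ∑ j, if i < j then g i j else 0) + (∑ i, ∑ j, if j < i then g i j else 0) := by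
    rw [← Finset.sum_add_distrib]
    refine Finset.sum_congr rfl fun i _ => ?_
    rw [← Finset.sum_add_distrib]
    exact Finset.sum_congr rfl fun j _ => h1 i j
  have h3 : (∑ i, ∑ j, if j < i then g i j else 0)
      = (∑ i, ∑ j, if i < j then g i j else 0) := by
    rw [Finset.sum_comm]
    exact Finset.sum_congr rfl fun i _ => Finset.sum_congr rfl fun j _ => by
      by_cases h : i < j <;> simp [h, hsym]
  rw [h2, h3, ifsum_eq]
  ring

private lemma ip_entries (A B : sk n) :
    ip A B = ∑ p ∈ PP n, A.1 p.1 p.2 * B.1 p.1 p.2 := by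
  have := sum_sym_eq (fun i j => A.1 i j * B.1 i j)
    (fun i j => by rw [skw A, skw B]; ring)
    (fun i => by have h := skw A i i; rw [show (A.1 i i) = 0 by linarith, zero_mul])
  rw [ip, this]; ring

private lemma wedge_entry (x y : Fin n → ℝ) (i j : Fin n) :
    (wedge x y).1 i j = x i * y j - x j * y i := rfl

private lemma ip_w (A : sk n) (i j : Fin n) (hij : i ≠ j) :
    ip A (wedge (stdVec n i) (stdVec n j)) = A.1 i j := by
  unfold ip
  have e : ∀ (a b k l : Fin n), (Pi.single a 1 : Fin n → ℝ) k * (Pi.single b 1 : Fin n → ℝ) l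
      = if k = a ∧ l = b then 1 else 0 := by
    intro a b k l
    rw [Pi.single_apply, Pi.single_apply]
    by_cases h1 : k = a <;> by_cases h2 : l = b <;> simp [h1, h2]
  have h : ∀ k l : Fin n, A.1 k l * (wedge (stdVec n i) (stdVec n j)).1 k l
      = (if k = i ∧ l = j then A.1 k l else 0) - (if k = j ∧ l = i then A.1 k l else 0) := by
    intro k l
    rw [wedge_entry]
    unfold stdVec
    rw [e i j k l, e i j l k]
    by_cases h1 : k = i ∧ l = j <;> by_cases h2 : k = j ∧ l = i <;>
      by_cases h3 : l = i ∧ k = j <;>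
      first
      | (exact absurd (And.intro h3.2 h3.1) h2)
      | (exact absurd (And.intro h2.2 h2.1) h3)
      | (exact absurd (h1.1.symm.trans h2.1) hij)
      | (simp [h1, h2, h3, hij, Ne.symm hij])
  have e1 : ∀ (a b : Fin n), (∑ k : Fin n, ∑ l : Fin n, if k = a ∧ l = b then A.1 k l else 0)
      = A.1 a b := by
    intro a b
    rw [Finset.sum_eq_single a]
    · rw [Finset.sum_eq_single b]
      · simp
      · intro c _ hc; simp [hc]
      · simp
    · intro c _ hc; apply Finset.sum_eq_zero; intro l _; simp [hc]
    · simp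
  simp_rw [h, Finset.sum_sub_distrib]
  rw [e1, e1, skw A i j]
  ring

private lemma ip_basis (A B : sk n) :
    ip A B = ∑ p ∈ PP n, ip A (w p) * ip B (w p) := by
  rw [ip_entries]
  refine Finset.sum_congr rfl fun p hp => ?_
  have : p.1 ≠ p.2 := by
    have := Finset.mem_filter.mp hp
    exact ne_of_lt this.2
  rw [w, ip_w _ _ _ this, ip_w _ _ _ this]

private lemma ip_trace (A B : sk n) : ip A B = -(1/2) * Matrix.trace (A.1 * B.1) := by
  rw [ip, Matrix.trace]
  have h : ∀ i : Fin n, Matrix.diag (A.1 * B.1) i = ∑ j, A.1 i j * B.1 j i := by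
    intro i; rw [Matrix.diag_apply, Matrix.mul_apply]
  simp_rw [h]
  have h2 : ∀ i j : Fin n, A.1 i j * B.1 j i = -(A.1 i j * B.1 i j) := by
    intro i j; rw [skw B]; ring
  simp_rw [h2, Finset.sum_neg_distrib]
  ring

private lemma br_val (A B : sk n) : (br A B).1 = A.1 * B.1 - B.1 * A.1 := rfl

private lemma ip_br_left (η A B : sk n) : ip (br η A) B = - ip A (br η B) := by
  rw [ip_trace, ip_trace, br_val, br_val]
  rw [Matrix.sub_mul, Matrix.mul_sub, Matrix.trace_sub, Matrix.trace_sub]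
  rw [show η.1 * A.1 * B.1 = η.1 * (A.1 * B.1) from mul_assoc _ _ _,
    Matrix.trace_mul_comm η.1 (A.1 * B.1)]
  rw [show A.1 * (B.1 * η.1) = A.1 * B.1 * η.1 from (mul_assoc _ _ _).symm]
  rw [show A.1 * (η.1 * B.1) = A.1 * η.1 * B.1 from (mul_assoc _ _ _).symm]
  ring

private lemma br_antisym (A B : sk n) : br A B = - br B A := by
  apply Subtype.ext
  rw [br_val]
  have : ((-br B A : sk n) : Matrix (Fin n) (Fin n) ℝ) = -(B.1 * A.1 - A.1 * B.1) := by
    rw [← br_val]; rfl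
  rw [this]
  noncomm_ring

private lemma br_add_left (A B C : sk n) : br (A + B) C = br A C + br B C := by
  apply Subtype.ext
  have : ((br A C + br B C : sk n) : Matrix (Fin n) (Fin n) ℝ) = (br A C).1 + (br B C).1 := rfl
  rw [this, br_val, br_val, br_val, Submodule.coe_add]
  noncomm_ring

private lemma br_add_right (A B C : sk n) : br A (B + C) = br A B + br A C := by
  apply Subtype.ext
  have : ((br A B + br A C : sk n) : Matrix (Fin n) (Fin n) ℝ) = (br A B).1 + (br A C).1 := rfl
  rw [this, br_val, br_val, br_val, Submodule.coe_add]
  noncomm_ring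

private def mm (R : sk n →ₗ[ℝ] sk n) (p q : Fin n × Fin n) : ℝ := ip (R (w q)) (w p)

private def cc (u v s : Fin n × Fin n) : ℝ := ip (br (w u) (w v)) (w s)

private lemma mm_sym {R : sk n →ₗ[ℝ] sk n} (hR : IsSym R) (p q : Fin n × Fin n) :
    mm R p q = mm R q p := by
  unfold mm
  rw [hR, ip_comm]

private lemma cc_swap12 (u v s : Fin n × Fin n) : cc u v s = - cc v u s := by
  unfold cc
  rw [br_antisym, ip_neg_left]

private lemma cc_swap23 (u v s : Fin n × Fin n) : cc u v s = - cc u s v := by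
  unfold cc
  rw [ip_br_left, ip_comm]

private lemma cc_swap13 (u v s : Fin n × Fin n) : cc u v s = - cc s v u := by
  rw [cc_swap12, cc_swap23, cc_swap12]; ring

private lemma opIp_eq (R S : sk n →ₗ[ℝ] sk n) :
    opIp R S = ∑ p ∈ PP n, ip (R (w p)) (S (w p)) := by
  rw [opIp, ifsum_eq (fun i j => ip (R (wedge (stdVec n i) (stdVec n j)))
    (S (wedge (stdVec n i) (stdVec n j))))]
  rfl

private lemma opIp_add_left (A B C : sk n →ₗ[ℝ] sk n) :
    opIp (A + B) C = opIp A C + opIp B C := by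
  rw [opIp_eq, opIp_eq, opIp_eq, ← Finset.sum_add_distrib]
  exact Finset.sum_congr rfl fun p _ => by rw [LinearMap.add_apply, ip_add_left]

private lemma opIp_sub_left (A B C : sk n →ₗ[ℝ] sk n) :
    opIp (A - B) C = opIp A C - opIp B C := by
  rw [opIp_eq, opIp_eq, opIp_eq, ← Finset.sum_sub_distrib]
  exact Finset.sum_congr rfl fun p _ => by rw [LinearMap.sub_apply, ip_sub_left]

private lemma opIp_smul_left (c : ℝ) (A B : sk n →ₗ[ℝ] sk n) :
    opIp (c • A) B = c * opIp A B := by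
  rw [opIp_eq, opIp_eq, Finset.mul_sum]
  exact Finset.sum_congr rfl fun p _ => by rw [LinearMap.smul_apply, ip_smul_left]

private def N3 {n : ℕ} (f g h : Fin n × Fin n → Fin n × Fin n → ℝ) : ℝ :=
  ∑ p ∈ PP n, ∑ q ∈ PP n, ∑ r ∈ PP n, f q p * (g r p * h r q)

private lemma opIp_comp {X Y Z : sk n →ₗ[ℝ] sk n} (hX : IsSym X) :
    opIp (X ∘ₗ Y) Z = N3 (mm Y) (mm Z) (mm X) := by
  rw [opIp_eq, N3]
  refine Finset.sum_congr rfl fun p _ => ?_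
  rw [LinearMap.comp_apply, hX (Y (w p)) (Z (w p)), ip_basis]
  refine Finset.sum_congr rfl fun q _ => ?_
  have h1 : ip (Y (w p)) (w q) = mm Y q p := rfl
  have h2 : ip (X (Z (w p))) (w q) = ∑ r ∈ PP n, mm Z r p * mm X r q := by
    rw [hX (Z (w p)) (w q), ip_basis]
    rfl
  rw [h1, h2, Finset.mul_sum]

private lemma N3_comm12 {f g h : Fin n × Fin n → Fin n × Fin n → ℝ}
    (hh : ∀ a b, h a b = h b a) : N3 f g h = N3 g f h := by
  unfold N3
  refine Finset.sum_congr rfl fun p _ => ?_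
  rw [Finset.sum_comm]
  refine Finset.sum_congr rfl fun q _ => Finset.sum_congr rfl fun r _ => ?_
  rw [hh q r]; ring

private lemma N3_comm23 {f g h : Fin n × Fin n → Fin n × Fin n → ℝ}
    (hf : ∀ a b, f a b = f b a) : N3 f g h = N3 f h g := by
  unfold N3
  rw [Finset.sum_comm]
  refine Finset.sum_congr rfl fun p _ => Finset.sum_congr rfl fun q _ =>
    Finset.sum_congr rfl fun r _ => ?_
  rw [hf p q]; ring

private def Psi {n : ℕ} (A B : sk n →ₗ[ℝ] sk n) (η ζ : sk n) : ℝ :=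
  -(1/2) * ∑ p ∈ PP n, ip (br η (A (br ζ (B (w p))))) (w p)

private lemma sharp_eq (R : sk n →ₗ[ℝ] sk n) (η : sk n) :
    sharpForm R η = Psi R R η η := by
  rw [sharpForm, Psi,
    ifsum_eq (fun i j => ip (br η (R (br η (R (wedge (stdVec n i) (stdVec n j))))))
      (wedge (stdVec n i) (stdVec n j)))]
  rfl

private lemma Psi_add_op1 (A A' B : sk n →ₗ[ℝ] sk n) (η ζ : sk n) :
    Psi (A + A') B η ζ = Psi A B η ζ + Psi A' B η ζ := by
  have h : ∀ p : Fin n × Fin n, ip (br η ((A + A') (br ζ (B (w p))))) (w p)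
      = ip (br η (A (br ζ (B (w p))))) (w p) + ip (br η (A' (br ζ (B (w p))))) (w p) := by
    intro p
    rw [LinearMap.add_apply, br_add_right, ip_add_left]
  unfold Psi
  simp_rw [h]
  rw [Finset.sum_add_distrib]
  ring

private lemma Psi_add_op2 (A B B' : sk n →ₗ[ℝ] sk n) (η ζ : sk n) :
    Psi A (B + B') η ζ = Psi A B η ζ + Psi A B' η ζ := by
  have h : ∀ p : Fin n × Fin n, ip (br η (A (br ζ ((B + B') (w p))))) (w p)
      = ip (br η (A (br ζ (B (w p))))) (w p) + ip (br η (A (br ζ (B' (w p))))) (w p) := by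
    intro p
    rw [LinearMap.add_apply, br_add_right, map_add, br_add_right, ip_add_left]
  unfold Psi
  simp_rw [h]
  rw [Finset.sum_add_distrib]
  ring

private lemma Psi_add_eta (A B : sk n →ₗ[ℝ] sk n) (η η' ζ : sk n) :
    Psi A B (η + η') ζ = Psi A B η ζ + Psi A B η' ζ := by
  have h : ∀ p : Fin n × Fin n, ip (br (η + η') (A (br ζ (B (w p))))) (w p)
      = ip (br η (A (br ζ (B (w p))))) (w p) + ip (br η' (A (br ζ (B (w p))))) (w p) := by
    intro p
    rw [br_add_left, ip_add_left]
  unfold Psi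
  simp_rw [h]
  rw [Finset.sum_add_distrib]
  ring

private lemma Psi_add_zeta (A B : sk n →ₗ[ℝ] sk n) (η ζ ζ' : sk n) :
    Psi A B η (ζ + ζ') = Psi A B η ζ + Psi A B η ζ' := by
  have h : ∀ p : Fin n × Fin n, ip (br η (A (br (ζ + ζ') (B (w p))))) (w p)
      = ip (br η (A (br ζ (B (w p))))) (w p) + ip (br η (A (br ζ' (B (w p))))) (w p) := by
    intro p
    rw [br_add_left, map_add, br_add_right, ip_add_left]
  unfold Psi
  simp_rw [h]
  rw [Finset.sum_add_distrib]
  ring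

private lemma sharp_polar {R S : sk n →ₗ[ℝ] sk n} (hS : IsSharp R S) (η ζ : sk n) :
    2 * ip (S η) ζ = sharpForm R (η + ζ) - sharpForm R η - sharpForm R ζ := by
  have h1 : ip (S (η + ζ)) (η + ζ)
      = ip (S η) η + ip (S η) ζ + ip (S ζ) η + ip (S ζ) ζ := by
    rw [map_add, ip_add_left, ip_add_right, ip_add_right]
    ring
  have h2 : ip (S ζ) η = ip (S η) ζ := by
    rw [hS.1 ζ η, ip_comm]
  have e1 := hS.2 (η + ζ)
  have e2 := hS.2 η
  have e3 := hS.2 ζ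
  rw [h1, h2] at e1
  linarith

private lemma Psi_coord {A : sk n →ₗ[ℝ] sk n} (B : sk n →ₗ[ℝ] sk n) (hA : IsSym A)
    (α β : Fin n × Fin n) :
    Psi A B (w α) (w β) = (1/2) * ∑ p ∈ PP n, ∑ ε ∈ PP n, ∑ γ ∈ PP n, ∑ δ ∈ PP n,
      mm B γ p * (mm A δ ε * (cc β γ δ * cc α p ε)) := by
  have h3 : ∀ ε γ : Fin n × Fin n, ip (br (w β) (A (w ε))) (w γ)
      = -∑ δ ∈ PP n, mm A δ ε * cc β γ δ := by
    intro ε γ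
    rw [ip_br_left, ip_basis]
    rfl
  have h2 : ∀ p ε : Fin n × Fin n, ip (A (br (w β) (B (w p)))) (w ε)
      = ∑ γ ∈ PP n, mm B γ p * ∑ δ ∈ PP n, mm A δ ε * cc β γ δ := by
    intro p ε
    rw [hA, ip_br_left, ip_basis, ← Finset.sum_neg_distrib]
    refine Finset.sum_congr rfl fun γ _ => ?_
    rw [h3 ε γ, show ip (B (w p)) (w γ) = mm B γ p from rfl]
    ring
  have h1 : ∀ p : Fin n × Fin n, ip (br (w α) (A (br (w β) (B (w p))))) (w p)
      = -∑ ε ∈ PP n,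
          (∑ γ ∈ PP n, mm B γ p * ∑ δ ∈ PP n, mm A δ ε * cc β γ δ) * cc α p ε := by
    intro p
    rw [ip_br_left, ip_basis]
    congr 1
    refine Finset.sum_congr rfl fun ε _ => ?_
    rw [h2 p ε]
    rfl
  unfold Psi
  simp_rw [h1]
  rw [Finset.sum_neg_distrib, neg_mul_neg]
  congr 1
  refine Finset.sum_congr rfl fun p _ => ?_
  simp_rw [Finset.sum_mul, Finset.mul_sum]
  refine Finset.sum_congr rfl fun ε _ => Finset.sum_congr rfl fun γ _ => ?_
  rw [Finset.sum_mul]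
  exact Finset.sum_congr rfl fun δ _ => by ring

private def Q6 (n : ℕ) : Finset ((Fin n × Fin n) × (Fin n × Fin n) × (Fin n × Fin n) ×
    (Fin n × Fin n) × (Fin n × Fin n) × (Fin n × Fin n)) :=
  PP n ×ˢ (PP n ×ˢ (PP n ×ˢ (PP n ×ˢ (PP n ×ˢ PP n))))

/-- t = (α, β, p, ε, γ, δ); summand z β α * (b γ p * (a δ ε * (cc β γ δ * cc α p ε))) -/
private def D6 {n : ℕ} (a b z : Fin n × Fin n → Fin n × Fin n → ℝ) : ℝ :=
  ∑ t ∈ Q6 n, z t.2.1 t.1 * (b t.2.2.2.2.1 t.2.2.1 *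
    (a t.2.2.2.2.2 t.2.2.2.1 * (cc t.2.1 t.2.2.2.2.1 t.2.2.2.2.2 * cc t.1 t.2.2.1 t.2.2.2.1)))

private lemma D6_eq (a b z : Fin n × Fin n → Fin n × Fin n → ℝ) :
    D6 a b z = ∑ α ∈ PP n, ∑ β ∈ PP n, ∑ p ∈ PP n, ∑ ε ∈ PP n, ∑ γ ∈ PP n, ∑ δ ∈ PP n,
      z β α * (b γ p * (a δ ε * (cc β γ δ * cc α p ε))) := by
  rw [D6, Q6]
  simp only [Finset.sum_product]

private lemma mem_Q6 {t : (Fin n × Fin n) × (Fin n × Fin n) × (Fin n × Fin n) ×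
    (Fin n × Fin n) × (Fin n × Fin n) × (Fin n × Fin n)} :
    t ∈ Q6 n ↔ t.1 ∈ PP n ∧ t.2.1 ∈ PP n ∧ t.2.2.1 ∈ PP n ∧ t.2.2.2.1 ∈ PP n ∧
      t.2.2.2.2.1 ∈ PP n ∧ t.2.2.2.2.2 ∈ PP n := by
  simp [Q6, Finset.mem_product]

private lemma D6_comm_ab {a b z : Fin n × Fin n → Fin n × Fin n → ℝ}
    (ha : ∀ u v, a u v = a v u) (hb : ∀ u v, b u v = b v u) (hz : ∀ u v, z u v = z v u) :
    D6 a b z = D6 b a z := by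
  unfold D6
  refine Finset.sum_nbij'
    (i := fun t => (t.2.1, t.1, t.2.2.2.2.2, t.2.2.2.2.1, t.2.2.2.1, t.2.2.1))
    (j := fun t => (t.2.1, t.1, t.2.2.2.2.2, t.2.2.2.2.1, t.2.2.2.1, t.2.2.1))
    ?_ ?_ ?_ ?_ ?_
  · intro t ht; rw [mem_Q6] at *; tauto
  · intro t ht; rw [mem_Q6] at *; tauto
  · intro t _; rfl
  · intro t _; rfl
  · intro t _
    obtain ⟨α, β, p, ε, γ, δ⟩ := t
    simp only []
    rw [hz β α, hb γ p, ha δ ε, cc_swap23 α ε p, cc_swap23 β δ γ]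
    ring

private lemma D6_comm_az {a b z : Fin n × Fin n → Fin n × Fin n → ℝ}
    (ha : ∀ u v, a u v = a v u) (hb : ∀ u v, b u v = b v u) (hz : ∀ u v, z u v = z v u) :
    D6 a b z = D6 z b a := by
  unfold D6
  refine Finset.sum_nbij'
    (i := fun t => (t.2.2.2.2.2, t.2.2.2.1, t.2.2.2.2.1, t.2.1, t.2.2.1, t.1))
    (j := fun t => (t.2.2.2.2.2, t.2.2.2.1, t.2.2.2.2.1, t.2.1, t.2.2.1, t.1))
    ?_ ?_ ?_ ?_ ?_
  · intro t ht; rw [mem_Q6] at *; tauto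
  · intro t ht; rw [mem_Q6] at *; tauto
  · intro t _; rfl
  · intro t _; rfl
  · intro t _
    obtain ⟨α, β, p, ε, γ, δ⟩ := t
    simp only []
    rw [hz β α, hb γ p, ha δ ε, cc_swap13 α p ε, cc_swap13 β γ δ]
    ring

private lemma mul_sum2 (s : Finset (Fin n × Fin n)) (c : ℝ)
    (F : Fin n × Fin n → Fin n × Fin n → ℝ) :
    (∑ p ∈ s, ∑ q ∈ s, c * F p q) = c * ∑ p ∈ s, ∑ q ∈ s, F p q := by
  rw [Finset.mul_sum]
  exact Finset.sum_congr rfl fun p _ => by rw [Finset.mul_sum]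

private lemma Psi_sum_eq {A : sk n →ₗ[ℝ] sk n} (B : sk n →ₗ[ℝ] sk n) (hA : IsSym A)
    (z : Fin n × Fin n → Fin n × Fin n → ℝ) :
    (∑ α ∈ PP n, ∑ β ∈ PP n, Psi A B (w α) (w β) * z β α)
      = (1/2) * D6 (mm A) (mm B) z := by
  rw [D6_eq, Finset.mul_sum]
  refine Finset.sum_congr rfl fun α _ => ?_
  rw [Finset.mul_sum]
  refine Finset.sum_congr rfl fun β _ => ?_
  rw [Psi_coord B hA α β, mul_assoc]
  congr 1
  rw [Finset.sum_mul]
  refine Finset.sum_congr rfl fun p _ => ?_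
  rw [Finset.sum_mul]
  refine Finset.sum_congr rfl fun ε _ => ?_
  rw [Finset.sum_mul]
  refine Finset.sum_congr rfl fun γ _ => ?_
  rw [Finset.sum_mul]
  exact Finset.sum_congr rfl fun δ _ => by ring

private lemma swap_sum (A B : sk n →ₗ[ℝ] sk n)
    {z : Fin n × Fin n → Fin n × Fin n → ℝ} (hz : ∀ u v, z u v = z v u) :
    (∑ α ∈ PP n, ∑ β ∈ PP n, Psi A B (w β) (w α) * z β α)
      = ∑ α ∈ PP n, ∑ β ∈ PP n, Psi A B (w α) (w β) * z β α := by
  rw [Finset.sum_comm]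
  exact Finset.sum_congr rfl fun α _ => Finset.sum_congr rfl fun β _ => by rw [hz α β]

private lemma master {R₁ R₂ R₃ S₁ S₂ S₁₂ : sk n →ₗ[ℝ] sk n}
    (h₁ : IsSym R₁) (h₂ : IsSym R₂) (h₃ : IsSym R₃)
    (hS₁ : IsSharp R₁ S₁) (hS₂ : IsSharp R₂ S₂) (hS₁₂ : IsSharp (R₁ + R₂) S₁₂) :
    opIp (Bpol R₁ R₂ S₁ S₂ S₁₂) R₃
      = (1/2) * (N3 (mm R₂) (mm R₃) (mm R₁) + N3 (mm R₁) (mm R₃) (mm R₂))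
        + (1/4) * (D6 (mm R₁) (mm R₂) (mm R₃) + D6 (mm R₂) (mm R₁) (mm R₃)) := by
  have hz : ∀ u v, mm R₃ u v = mm R₃ v u := mm_sym h₃
  have hB : Bpol R₁ R₂ S₁ S₂ S₁₂
      = ((1:ℝ)/2) • (R₁ ∘ₗ R₂ + R₂ ∘ₗ R₁ + (S₁₂ - S₁ - S₂)) := by
    unfold Bpol
    congr 1
    ext η
    simp only [LinearMap.add_apply, LinearMap.sub_apply, LinearMap.comp_apply, map_add]
    abel
  have key : ∀ η ζ : sk n, ip (S₁₂ η) ζ - ip (S₁ η) ζ - ip (S₂ η) ζ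
      = (1/2) * (Psi R₁ R₂ η ζ + Psi R₂ R₁ η ζ + Psi R₁ R₂ ζ η + Psi R₂ R₁ ζ η) := by
    intro η ζ
    have p12 := sharp_polar hS₁₂ η ζ
    have p1 := sharp_polar hS₁ η ζ
    have p2 := sharp_polar hS₂ η ζ
    have exp : ∀ u : sk n, sharpForm (R₁ + R₂) u
        = sharpForm R₁ u + sharpForm R₂ u + (Psi R₁ R₂ u u + Psi R₂ R₁ u u) := by
      intro u
      rw [sharp_eq, sharp_eq, sharp_eq, Psi_add_op1, Psi_add_op2, Psi_add_op2]
      ring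
    have quad : ∀ (X Y : sk n →ₗ[ℝ] sk n), Psi X Y (η + ζ) (η + ζ)
        = Psi X Y η η + Psi X Y η ζ + Psi X Y ζ η + Psi X Y ζ ζ := by
      intro X Y
      rw [Psi_add_eta, Psi_add_zeta, Psi_add_zeta]
      ring
    have e1 := exp (η + ζ)
    have e2 := exp η
    have e3 := exp ζ
    have q12 := quad R₁ R₂
    have q21 := quad R₂ R₁
    rw [e1, e2, e3, q12, q21] at p12
    linarith
  have hd : opIp (S₁₂ - S₁ - S₂) R₃
      = (1/2) * (D6 (mm R₁) (mm R₂) (mm R₃) + D6 (mm R₂) (mm R₁) (mm R₃)) := by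
    have step1 : opIp (S₁₂ - S₁ - S₂) R₃
        = ∑ p ∈ PP n, ∑ q ∈ PP n,
            (ip (S₁₂ (w p)) (w q) - ip (S₁ (w p)) (w q) - ip (S₂ (w p)) (w q))
              * mm R₃ q p := by
      rw [opIp_eq]
      refine Finset.sum_congr rfl fun p _ => ?_
      rw [ip_basis]
      refine Finset.sum_congr rfl fun q _ => ?_
      rw [LinearMap.sub_apply, LinearMap.sub_apply, ip_sub_left, ip_sub_left]
      rfl
    have add2 : ∀ F G : Fin n × Fin n → Fin n × Fin n → ℝ,
        ((∑ p ∈ PP n, ∑ q ∈ PP n, F p q) + ∑ p ∈ PP n, ∑ q ∈ PP n, G p q)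
          = ∑ p ∈ PP n, ∑ q ∈ PP n, (F p q + G p q) := by
      intro F G
      rw [← Finset.sum_add_distrib]
      exact Finset.sum_congr rfl fun p _ => by rw [← Finset.sum_add_distrib]
    have step2 : opIp (S₁₂ - S₁ - S₂) R₃
        = (1/2) * ((∑ α ∈ PP n, ∑ β ∈ PP n, Psi R₁ R₂ (w α) (w β) * mm R₃ β α)
          + ((∑ α ∈ PP n, ∑ β ∈ PP n, Psi R₂ R₁ (w α) (w β) * mm R₃ β α)
          + ((∑ α ∈ PP n, ∑ β ∈ PP n, Psi R₁ R₂ (w β) (w α) * mm R₃ β α)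
          + (∑ α ∈ PP n, ∑ β ∈ PP n, Psi R₂ R₁ (w β) (w α) * mm R₃ β α)))) := by
      rw [step1, add2, add2, add2, Finset.mul_sum]
      refine Finset.sum_congr rfl fun p _ => ?_
      rw [Finset.mul_sum]
      refine Finset.sum_congr rfl fun q _ => ?_
      rw [key]
      ring
    rw [step2, swap_sum R₁ R₂ hz, swap_sum R₂ R₁ hz, Psi_sum_eq (A := R₁) R₂ h₁ (mm R₃),
      Psi_sum_eq (A := R₂) R₁ h₂ (mm R₃)]
    ring
  rw [hB, opIp_smul_left, opIp_add_left, opIp_add_left, opIp_comp h₁, opIp_comp h₂, hd]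
  ring

end Infra

/-- The trilinear form (R₁,R₂,R₃) ↦ ⟨B(R₁,R₂), R₃⟩ on algebraic curvature
operators is symmetric in its three entries, where B is the polarization of
Q(R) = R² + R^#. -/
theorem stmt9 (n : ℕ) (R₁ R₂ R₃ : sk n →ₗ[ℝ] sk n)
    (h₁ : IsSym R₁ ∧ Bianchi R₁) (h₂ : IsSym R₂ ∧ Bianchi R₂)
    (h₃ : IsSym R₃ ∧ Bianchi R₃)
    (S₁ S₂ S₃ S₁₂ S₁₃ S₂₃ : sk n →ₗ[ℝ] sk n)
    (hS₁ : IsSharp R₁ S₁) (hS₂ : IsSharp R₂ S₂) (hS₃ : IsSharp R₃ S₃)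
    (hS₁₂ : IsSharp (R₁ + R₂) S₁₂) (hS₁₃ : IsSharp (R₁ + R₃) S₁₃)
    (hS₂₃ : IsSharp (R₂ + R₃) S₂₃) :
    opIp (Bpol R₁ R₂ S₁ S₂ S₁₂) R₃ = opIp (Bpol R₁ R₃ S₁ S₃ S₁₃) R₂ ∧
    opIp (Bpol R₁ R₂ S₁ S₂ S₁₂) R₃ = opIp (Bpol R₂ R₃ S₂ S₃ S₂₃) R₁ := by
  have hm₁ : ∀ u v, mm R₁ u v = mm R₁ v u := mm_sym h₁.1
  have hm₂ : ∀ u v, mm R₂ u v = mm R₂ v u := mm_sym h₂.1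
  have hm₃ : ∀ u v, mm R₃ u v = mm R₃ v u := mm_sym h₃.1
  have c1 : N3 (mm R₁) (mm R₃) (mm R₂) = N3 (mm R₁) (mm R₂) (mm R₃) := N3_comm23 hm₁
  have c2 : N3 (mm R₂) (mm R₁) (mm R₃) = N3 (mm R₁) (mm R₂) (mm R₃) := N3_comm12 hm₃
  have c3 : N3 (mm R₂) (mm R₃) (mm R₁) = N3 (mm R₁) (mm R₂) (mm R₃) :=
    (N3_comm23 hm₂).trans c2
  have c4 : N3 (mm R₃) (mm R₂) (mm R₁) = N3 (mm R₁) (mm R₂) (mm R₃) :=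
    (N3_comm12 hm₁).trans c3
  have c5 : N3 (mm R₃) (mm R₁) (mm R₂) = N3 (mm R₁) (mm R₂) (mm R₃) :=
    (N3_comm23 hm₃).trans c4
  have g1 : D6 (mm R₂) (mm R₁) (mm R₃) = D6 (mm R₁) (mm R₂) (mm R₃) :=
    D6_comm_ab hm₂ hm₁ hm₃
  have g2 : D6 (mm R₃) (mm R₂) (mm R₁) = D6 (mm R₁) (mm R₂) (mm R₃) :=
    D6_comm_az hm₃ hm₂ hm₁
  have g5 : D6 (mm R₂) (mm R₃) (mm R₁) = D6 (mm R₁) (mm R₂) (mm R₃) :=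
    (D6_comm_ab hm₂ hm₃ hm₁).trans g2
  have g3 : D6 (mm R₁) (mm R₃) (mm R₂) = D6 (mm R₁) (mm R₂) (mm R₃) :=
    (D6_comm_az hm₁ hm₃ hm₂).trans g5
  have g4 : D6 (mm R₃) (mm R₁) (mm R₂) = D6 (mm R₁) (mm R₂) (mm R₃) :=
    (D6_comm_ab hm₃ hm₁ hm₂).trans g3
  constructor
  · rw [master h₁.1 h₂.1 h₃.1 hS₁ hS₂ hS₁₂, master h₁.1 h₃.1 h₂.1 hS₁ hS₃ hS₁₃]
    simp only [c1, c2, c3, c4, c5, g1, g2, g3, g4, g5]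
  · rw [master h₁.1 h₂.1 h₃.1 hS₁ hS₂ hS₁₂, master h₂.1 h₃.1 h₁.1 hS₂ hS₃ hS₂₃]
    simp only [c1, c2, c3, c4, c5, g1, g2, g3, g4, g5]
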